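/- In the polynomial ring ℤ[x₁, x₂, x₃, x₄, x₅] with the symmetric group S₅ acting by permuting the variables, consider δ = x₁x₂ + x₂x₃ + x₃x₄ + x₄x₅ + x₅x₁ − x₁x₃ − x₃x₅ − x₅x₂ − x₂x₄ − x₄x₁. Then the 5-cycle (1 2 3 4 5) fixes δ, the 4-cycle (1 2 4 3) sends δ to −δ, and consequently the square δ² is fixed by every element of the subgroup of S₅ generated by (1 2 3 4 5) and (1 2 4 3) (a subgroup of order 20). -/

import Mathlib

set_option maxRecDepth 4000 in
open MvPolynomial in
/-- In `ℤ[x₁, …, x₅]` with `S₅` acting by permuting the variables, let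
`δ = x₁x₂ + x₂x₃ + x₃x₄ + x₄x₅ + x₅x₁ − x₁x₃ − x₃x₅ − x₅x₂ − x₂x₄ − x₄x₁`.
Then the `5`-cycle `(1 2 3 4 5)` fixes `δ`, the `4`-cycle `(1 2 4 3)` sends `δ` to `−δ`,
and consequently `δ²` is fixed by every element of the subgroup generated by these two
permutations (a subgroup of order `20`).  (Zero-indexed, the two permutations are the
cycles `(0 1 2 3 4)` and `(0 1 3 2)`.) -/
theorem stmt_14 (δ : MvPolynomial (Fin 5) ℤ)
    (hδ : δ = X 0 * X 1 + X 1 * X 2 + X 2 * X 3 + X 3 * X 4 + X 4 * X 0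
      - X 0 * X 2 - X 2 * X 4 - X 4 * X 1 - X 1 * X 3 - X 3 * X 0)
    (c5 c4 : Equiv.Perm (Fin 5))
    (hc5 : c5 = c[0, 1, 2, 3, 4]) (hc4 : c4 = c[0, 1, 3, 2]) :
    rename ⇑c5 δ = δ ∧
    rename ⇑c4 δ = -δ ∧
    (∀ g ∈ Subgroup.closure {c5, c4}, rename ⇑g (δ ^ 2) = δ ^ 2) ∧
    Nat.card (Subgroup.closure {c5, c4}) = 20 := by
  have h5 : ⇑c5 = ![1,2,3,4,0] := by rw [hc5]; decide
  have h4 : ⇑c4 = ![1,3,0,2,4] := by rw [hc4]; decide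
  have H5 : rename ⇑c5 δ = δ := by
    rw [h5, hδ]
    simp only [map_add, map_sub, map_mul, rename_X, Matrix.cons_val_zero, Matrix.cons_val_one,
      Matrix.head_cons, Matrix.cons_val_two, Matrix.tail_cons, Matrix.cons_val_three,
      Matrix.cons_val_four, Matrix.cons_val_fin_one]
    ring
  have H4 : rename ⇑c4 δ = -δ := by
    rw [h4, hδ]
    simp only [map_add, map_sub, map_mul, rename_X, Matrix.cons_val_zero, Matrix.cons_val_one,
      Matrix.head_cons, Matrix.cons_val_two, Matrix.tail_cons, Matrix.cons_val_three,
      Matrix.cons_val_four, Matrix.cons_val_fin_one]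
    ring
  have hcancel : ∀ (g : Equiv.Perm (Fin 5)) (p : MvPolynomial (Fin 5) ℤ),
      rename ⇑g⁻¹ (rename ⇑g p) = p := by
    intro g p
    rw [rename_rename]
    have : ⇑g⁻¹ ∘ ⇑g = id := by funext x; simp
    rw [this, rename_id, AlgHom.id_apply]
  have key : ∀ g ∈ Subgroup.closure {c5, c4}, rename ⇑g δ = δ ∨ rename ⇑g δ = -δ := by
    intro g hg
    induction hg using Subgroup.closure_induction with
    | mem x hx =>
      rcases hx with h | h
      · subst h; exact Or.inl H5
      · simp only [Set.mem_singleton_iff] at h; subst h; exact Or.inr H4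
    | one => left; simp [rename_id]
    | mul a b _ _ ha hb =>
      have hab : rename ⇑(a * b) δ = rename ⇑a (rename ⇑b δ) := by
        rw [rename_rename]; rfl
      rw [hab]
      rcases hb with h | h <;> rw [h] <;> [skip; rw [map_neg]] <;>
        rcases ha with h' | h' <;> simp [h']
    | inv a _ ha =>
      rcases ha with h | h
      · left; nth_rewrite 1 [← h]; exact hcancel a δ
      · right
        have hc := hcancel a δ
        rw [h, map_neg] at hc
        linear_combination (norm := module) -hc
  have key2 : ∀ g ∈ Subgroup.closure {c5, c4}, rename ⇑g (δ ^ 2) = δ ^ 2 := by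
    intro g hg
    rcases key g hg with h | h <;> rw [map_pow, h] <;> ring
  refine ⟨H5, H4, key2, ?_⟩
  classical
  set s : Finset (Equiv.Perm (Fin 5)) :=
    Finset.image (fun p : Fin 5 × Fin 4 => c5 ^ (p.1 : ℕ) * c4 ^ (p.2 : ℕ)) Finset.univ with hs
  have hsc : s = Finset.image (fun p : Fin 5 × Fin 4 =>
      (c[0,1,2,3,4] : Equiv.Perm (Fin 5)) ^ (p.1 : ℕ) *
      (c[0,1,3,2] : Equiv.Perm (Fin 5)) ^ (p.2 : ℕ)) Finset.univ := by
    rw [hs, hc5, hc4]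
  have hmul : ∀ a ∈ s, ∀ b ∈ s, a * b ∈ s := by rw [hsc]; decide
  have hinv : ∀ a ∈ s, a⁻¹ ∈ s := by rw [hsc]; decide
  have hone : (1 : Equiv.Perm (Fin 5)) ∈ s := by rw [hsc]; decide
  let H : Subgroup (Equiv.Perm (Fin 5)) :=
    { carrier := ↑s
      one_mem' := hone
      mul_mem' := fun {a b} ha hb => hmul a ha b hb
      inv_mem' := fun {a} ha => hinv a ha }
  have heq : Subgroup.closure {c5, c4} = H := by
    apply le_antisymm
    · rw [Subgroup.closure_le]
      intro x hx
      rcases hx with h | h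
      · rw [h]
        show c5 ∈ s
        rw [hsc, hc5]; decide
      · simp only [Set.mem_singleton_iff] at h
        rw [h]
        show c4 ∈ s
        rw [hsc, hc4]; decide
    · intro x hx
      have : x ∈ s := hx
      rw [hs] at this
      simp only [Finset.mem_image, Finset.mem_univ, true_and] at this
      obtain ⟨⟨i, j⟩, rfl⟩ := this
      exact mul_mem (pow_mem (Subgroup.subset_closure (by simp)) _)
        (pow_mem (Subgroup.subset_closure (by simp)) _)
  rw [heq]
  have : Nat.card H = s.card := by
    calc Nat.card H = Nat.card (↑s : Set (Equiv.Perm (Fin 5))) := rfl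
      _ = (↑s : Set (Equiv.Perm (Fin 5))).ncard := Nat.card_coe_set_eq _
      _ = s.card := Set.ncard_coe_finset s
  rw [this, hsc]
  decide
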